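/- Let f ∈ Lip₁([0,1], ℝ), s < t in [0,1], τ, ε ∈ (0,1), and suppose |f(t) − f(s)| = t − s. Then there exists δ > 0 such that for every g ∈ Lip₁([0,1], ℝ) with ‖g − f‖_∞ ≤ δ, the set C = {r ∈ [s,t] : g′(r) exists and g′(r) ≥ τ} (or with g′(r) ≤ −τ, according to the sign of f(t) − f(s)) has Lebesgue measure at least (1 − ε)(t − s). -/

import Mathlib

open MeasureTheory
open Set

lemma aux_pos (f : ℝ → ℝ)
    (s t : ℝ) (hs : s ∈ Set.Icc (0:ℝ) 1) (ht : t ∈ Set.Icc (0:ℝ) 1) (hst : s < t)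
    (τ ε : ℝ) (hτ : τ ∈ Set.Ioo (0:ℝ) 1) (hε : ε ∈ Set.Ioo (0:ℝ) 1)
    (heq : f t - f s = t - s) :
    ∃ δ > 0, ∀ g : ℝ → ℝ, LipschitzOnWith 1 g (Set.Icc 0 1) →
      (∀ x ∈ Set.Icc (0:ℝ) 1, |g x - f x| ≤ δ) →
      ENNReal.ofReal ((1 - ε) * (t - s)) ≤
        volume {r | r ∈ Set.Ioo s t ∧ ∃ v : ℝ, HasDerivAt g v r ∧ τ ≤ v} := by
  obtain ⟨hτ0, hτ1⟩ := hτ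
  obtain ⟨hε0, hε1⟩ := hε
  have hts : 0 < t - s := sub_pos.2 hst
  refine ⟨(1 - τ) * (t - s) * ε / 2, div_pos (mul_pos (mul_pos (sub_pos.2 hτ1) hts) hε0) two_pos, fun g hg hclose => ?_⟩
  set δ : ℝ := (1 - τ) * (t - s) * ε / 2 with hδdef
  obtain ⟨G, hG, hGg⟩ := hg.extend_real
  set φ : ℝ → ℝ := fun x => x - G x with hφdef
  have hφ : Monotone φ := by
    intro x y hxy
    have h1 : |G y - G x| ≤ |y - x| := by
      have := hG.dist_le_mul y x
      simpa [Real.dist_eq] using this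
    have h2 : G y - G x ≤ y - x := by
      have := le_abs_self (G y - G x)
      rw [abs_of_nonneg (sub_nonneg.2 hxy)] at h1
      linarith
    simp only [hφdef]
    linarith
  have hst_eq : ∀ x, hφ.stieltjesFunction x = φ x := by
    intro x
    refine (hφ.stieltjesFunction_eq x).trans ?_
    refine rightLim_eq_of_tendsto (h := nhdsGT_neBot x) ?_
    exact ((continuous_id.sub hG.continuous).tendsto x).mono_left nhdsWithin_le_nhds
  set B : Set ℝ := (Ioo s t ∩ {x | DifferentiableAt ℝ G x}) ∩ {x | deriv G x < τ} with hBdef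
  have hae : ∀ᵐ x, x ∈ B →
      ENNReal.ofReal (1 - τ) ≤ Measure.rnDeriv hφ.stieltjesFunction.measure volume x := by
    filter_upwards [hφ.ae_hasDerivAt] with x hx hxB
    obtain ⟨⟨hx1, hx2⟩, hx3⟩ := hxB
    have hdG : HasDerivAt G (deriv G x) x := hx2.hasDerivAt
    have hdφ : HasDerivAt φ (1 - deriv G x) x := (hasDerivAt_id x).sub hdG
    have huniq := hx.unique hdφ
    exact ENNReal.ofReal_le_of_le_toReal (by rw [huniq]; have h3 : deriv G x < τ := hx3; linarith)
  have hφts : φ t - φ s ≤ 2 * δ := by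
    have h1 := abs_le.1 (hclose t ht)
    have h2 := abs_le.1 (hclose s hs)
    simp only [hφdef]
    rw [← hGg ht, ← hGg hs]
    have hδ2 : 2 * δ = (1 - τ) * (t - s) * ε := by rw [hδdef]; ring
    nlinarith [h1.1, h1.2, h2.1, h2.2, heq, mul_pos (mul_pos (sub_pos.2 hτ1) hts) hε0]
  have key : ENNReal.ofReal (1 - τ) * volume B ≤ ENNReal.ofReal (2 * δ) := by
    calc ENNReal.ofReal (1 - τ) * volume B
        = ∫⁻ _ in B, ENNReal.ofReal (1 - τ) ∂volume := (setLIntegral_const _ _).symm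
      _ ≤ ∫⁻ x in B, Measure.rnDeriv hφ.stieltjesFunction.measure volume x ∂volume :=
          setLIntegral_mono_ae (Measure.measurable_rnDeriv _ _).aemeasurable hae
      _ ≤ hφ.stieltjesFunction.measure B := Measure.setLIntegral_rnDeriv_le B
      _ ≤ hφ.stieltjesFunction.measure (Ioc s t) :=
          measure_mono (fun x hx => Ioo_subset_Ioc_self hx.1.1)
      _ = ENNReal.ofReal (φ t - φ s) := by
          rw [StieltjesFunction.measure_Ioc, hst_eq, hst_eq]
      _ ≤ ENNReal.ofReal (2 * δ) := ENNReal.ofReal_le_ofReal hφts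
  have volB : volume B ≤ ENNReal.ofReal (ε * (t - s)) := by
    have h2δ : 2 * δ = (1 - τ) * (ε * (t - s)) := by rw [hδdef]; ring
    rw [h2δ, ENNReal.ofReal_mul (by linarith)] at key
    exact (ENNReal.mul_le_mul_iff_right (ENNReal.ofReal_pos.2 (by linarith)).ne'
      ENNReal.ofReal_ne_top).1 key
  set N : Set ℝ := {x | ¬ DifferentiableAt ℝ G x} with hNdef
  have hN : volume N = 0 := by
    have := hG.ae_differentiableAt_of_real (μ := volume)
    rwa [ae_iff] at this
  have hsub : Ioo s t \ (B ∪ N) ⊆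
      {r | r ∈ Set.Ioo s t ∧ ∃ v : ℝ, HasDerivAt g v r ∧ τ ≤ v} := by
    rintro r ⟨hr, hrn⟩
    have hd : DifferentiableAt ℝ G r := by
      by_contra h; exact hrn (Or.inr h)
    have hτle : τ ≤ deriv G r := by
      by_contra h; push_neg at h; exact hrn (Or.inl ⟨⟨hr, hd⟩, h⟩)
    have hIcc : Set.Icc (0:ℝ) 1 ∈ nhds r :=
      Icc_mem_nhds (lt_of_le_of_lt hs.1 hr.1) (lt_of_lt_of_le hr.2 ht.2)
    have heq' : g =ᶠ[nhds r] G := Filter.eventually_of_mem hIcc (fun y hy => hGg hy)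
    exact ⟨hr, deriv G r, hd.hasDerivAt.congr_of_eventuallyEq heq', hτle⟩
  calc ENNReal.ofReal ((1 - ε) * (t - s))
      = ENNReal.ofReal (t - s) - ENNReal.ofReal (ε * (t - s)) := by
        rw [← ENNReal.ofReal_sub _ (by positivity)]
        congr 1; ring
    _ ≤ volume (Ioo s t) - volume (B ∪ N) := by
        rw [Real.volume_Ioo]
        refine tsub_le_tsub_left (le_trans (measure_union_le _ _) ?_) _
        rw [hN]; simpa using volB
    _ ≤ volume (Ioo s t \ (B ∪ N)) := le_measure_diff
    _ ≤ _ := measure_mono hsub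

/-- If `f` is `1`-Lipschitz on `[0,1]`, `s < t` and `|f t - f s| = t - s`, then every
`1`-Lipschitz function `g` that is uniformly `δ`-close to `f` (for a suitable `δ > 0`) has
derivative at least `τ` (resp. at most `-τ`, according to the sign of `f t - f s`) on a
subset of `[s,t]` of measure at least `(1-ε)(t-s)`. -/
theorem stmt6 (f : ℝ → ℝ) (hf : LipschitzOnWith 1 f (Set.Icc 0 1))
    (s t : ℝ) (hs : s ∈ Set.Icc (0:ℝ) 1) (ht : t ∈ Set.Icc (0:ℝ) 1) (hst : s < t)
    (τ ε : ℝ) (hτ : τ ∈ Set.Ioo (0:ℝ) 1) (hε : ε ∈ Set.Ioo (0:ℝ) 1)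
    (hiso : |f t - f s| = t - s) :
    ∃ δ > 0, ∀ g : ℝ → ℝ, LipschitzOnWith 1 g (Set.Icc 0 1) →
      (∀ x ∈ Set.Icc (0:ℝ) 1, |g x - f x| ≤ δ) →
      ENNReal.ofReal ((1 - ε) * (t - s)) ≤
        volume {r | r ∈ Set.Icc s t ∧ ∃ v : ℝ, HasDerivAt g v r ∧
          (0 ≤ f t - f s → τ ≤ v) ∧ (f t - f s ≤ 0 → v ≤ -τ)} := by
  have hts : 0 < t - s := sub_pos.2 hst
  rcases le_or_gt 0 (f t - f s) with hsign | hsign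
  · have heq : f t - f s = t - s := by rw [← hiso, abs_of_nonneg hsign]
    obtain ⟨δ, hδ, H⟩ := aux_pos f s t hs ht hst τ ε hτ hε heq
    refine ⟨δ, hδ, fun g hg hc => le_trans (H g hg hc) (measure_mono ?_)⟩
    rintro r ⟨hr, v, hv, hτv⟩
    exact ⟨Set.Ioo_subset_Icc_self hr, v, hv, fun _ => hτv,
      fun h => absurd (heq ▸ h) (not_le.2 hts)⟩
  · have hneg : f t - f s = -(t - s) := by
      rcases (abs_eq hts.le).1 hiso with h | h
      · linarith
      · exact h
    have heq : (fun x => -f x) t - (fun x => -f x) s = t - s := by simp; linarith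
    have lneg : LipschitzWith 1 (fun y : ℝ => -y) := LipschitzWith.id.neg
    have hfneg : LipschitzOnWith 1 (fun x => -f x) (Set.Icc 0 1) := by
      have := lneg.comp_lipschitzOnWith hf; rwa [mul_one] at this
    obtain ⟨δ, hδ, H⟩ := aux_pos (fun x => -f x) s t hs ht hst τ ε hτ hε heq
    refine ⟨δ, hδ, fun g hg hc => ?_⟩
    have hgneg : LipschitzOnWith 1 (fun x => -g x) (Set.Icc 0 1) := by
      have := lneg.comp_lipschitzOnWith hg; rwa [mul_one] at this
    have hcneg : ∀ x ∈ Set.Icc (0:ℝ) 1, |(-g x) - (-f x)| ≤ δ := by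
      intro x hx
      have : (-g x) - (-f x) = -(g x - f x) := by ring
      rw [this, abs_neg]
      exact hc x hx
    refine le_trans (H _ hgneg hcneg) (measure_mono ?_)
    rintro r ⟨hr, v, hv, hτv⟩
    have hg' : HasDerivAt g (-v) r := hv.neg.congr_of_eventuallyEq (Filter.Eventually.of_forall fun x => by simp)
    exact ⟨Set.Ioo_subset_Icc_self hr, -v, hg',
      fun h => absurd h (not_le.2 hsign), fun _ => by linarith⟩
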